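/- Let λ : ℕ → ℝ with λ(n) > 0 for all n, k : ℕ → ℝ with k(j) > 0, and ν(I) = (I!/|I|!)·λ(|I|)⁻¹·∏_r k(r)^(2·I(r)). Fix y : ℕ → ℂ and define the kernel-section coefficients ε(I) = (∏_{r ∈ supp I} conj(y(r))^(I(r)))/ν(I). Then ε is an eigenvector of each annihilation operator: for every j : ℕ and every multi-index I, k(j)·(I(j)+1)·(λ(|I|)/((|I|+1)·λ(|I|+1)))·ε(I + e_j) = (conj(y(j))/k(j))·ε(I). -/

import Mathlib

open scoped BigOperators

/-- The degree `|I| = ∑_r I r` of a multi-index. -/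
noncomputable def mdeg (I : ℕ →₀ ℕ) : ℕ := I.sum fun _ n => n

/-- The factorial `I! = ∏_r (I r)!` of a multi-index. -/
noncomputable def mfact (I : ℕ →₀ ℕ) : ℕ := I.prod fun _ n => n.factorial

/-- The weight `ν(I) = (I!/|I|!)·λ(|I|)⁻¹·∏_r k(r)^(2·I(r))`. -/
noncomputable def nuwt (lam : ℕ → ℝ) (k : ℕ → ℝ) (I : ℕ →₀ ℕ) : ℝ :=
  ((mfact I : ℝ) / (Nat.factorial (mdeg I) : ℝ)) * (lam (mdeg I))⁻¹ *
    ∏ r ∈ I.support, k r ^ (2 * I r)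

/-- Kernel-section coefficients `ε(I) = (∏_{r ∈ supp I} conj(y r)^(I r))/ν(I)`. -/
noncomputable def kerCoeff (lam : ℕ → ℝ) (k : ℕ → ℝ) (y : ℕ → ℂ) (I : ℕ →₀ ℕ) : ℂ :=
  (∏ r ∈ I.support, (starRingEnd ℂ) (y r) ^ I r) / (nuwt lam k I : ℂ)

lemma mdeg_add_single (I : ℕ →₀ ℕ) (j : ℕ) :
    mdeg (I + Finsupp.single j 1) = mdeg I + 1 := by
  unfold mdeg
  rw [Finsupp.sum_add_index' (fun _ => rfl) (fun _ _ _ => rfl),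
    Finsupp.sum_single_index rfl]

lemma prod_pow_add_single {M : Type*} [CommMonoid M] (f : ℕ → M) (I : ℕ →₀ ℕ) (j : ℕ) :
    ((I + Finsupp.single j 1).prod fun r n => f r ^ n) =
      f j * I.prod fun r n => f r ^ n := by
  rw [Finsupp.prod_add_index' (fun _ => pow_zero _) (fun a b c => pow_add _ _ _)]
  rw [mul_comm]
  congr 1
  simp [Finsupp.prod_single_index]

lemma mfact_add_single (I : ℕ →₀ ℕ) (j : ℕ) :
    mfact (I + Finsupp.single j 1) = (I j + 1) * mfact I := by
  unfold mfact
  rw [← Finsupp.mul_prod_erase' (I + Finsupp.single j 1) j _ (fun _ => rfl),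
    ← Finsupp.mul_prod_erase' I j _ (fun _ => rfl),
    Finsupp.erase_add, Finsupp.erase_single, add_zero, Finsupp.add_apply,
    Finsupp.single_eq_same, Nat.factorial_succ, mul_assoc]

lemma prod_pow2_add_single {M : Type*} [CommMonoid M] (f : ℕ → M) (I : ℕ →₀ ℕ) (j : ℕ) :
    ((I + Finsupp.single j 1).prod fun r n => f r ^ (2 * n)) =
      f j ^ 2 * I.prod fun r n => f r ^ (2 * n) := by
  rw [Finsupp.prod_add_index' (fun _ => by simp) (fun a b c => by
    rw [Nat.mul_add, pow_add])]
  rw [mul_comm]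
  congr 1
  simp [Finsupp.prod_single_index]

lemma stmt12_key (K M N L1 L2 A B P Yj Y : ℂ) (hK : K ≠ 0) (hm : M ≠ 0) (hn : N ≠ 0)
    (h1 : L1 ≠ 0) (h2 : L2 ≠ 0) (hA : A ≠ 0) (hB : B ≠ 0) (hP : P ≠ 0) :
    K * M * (L1/(N*L2)) * ((Yj*Y)/(M*A/(N*B) * L2⁻¹ * (K^2*P))) =
      (Yj/K) * (Y/(A/B*L1⁻¹*P)) := by
  rw [← mul_div_assoc, div_mul_div_comm,
    div_eq_div_iff
      (mul_ne_zero (mul_ne_zero (div_ne_zero (mul_ne_zero hm hA) (mul_ne_zero hn hB))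
        (inv_ne_zero h2)) (mul_ne_zero (pow_ne_zero 2 hK) hP))
      (mul_ne_zero hK (mul_ne_zero (mul_ne_zero (div_ne_zero hA hB) (inv_ne_zero h1)) hP))]
  field_simp

theorem stmt12 (lam : ℕ → ℝ) (hlam_pos : ∀ n, 0 < lam n)
    (k : ℕ → ℝ) (hk : ∀ r, 0 < k r) (y : ℕ → ℂ) (j : ℕ) (I : ℕ →₀ ℕ) :
    (k j : ℂ) * ((I j : ℂ) + 1) *
        ((lam (mdeg I) : ℂ) / (((mdeg I : ℂ) + 1) * (lam (mdeg I + 1) : ℂ))) *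
        kerCoeff lam k y (I + Finsupp.single j 1) =
      ((starRingEnd ℂ) (y j) / (k j : ℂ)) * kerCoeff lam k y I := by
  have hY := prod_pow_add_single (fun r => (starRingEnd ℂ) (y r)) I j
  have hK := prod_pow2_add_single k I j
  rw [Finsupp.prod, Finsupp.prod] at hY hK
  have hP : (0:ℝ) < ∏ r ∈ I.support, k r ^ (2 * I r) :=
    Finset.prod_pos fun r _ => pow_pos (hk r) _
  have hF : (0:ℕ) < mfact I := Finset.prod_pos fun r _ => (I r).factorial_pos
  simp only [kerCoeff, nuwt, mdeg_add_single, mfact_add_single, hY, hK]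
  push_cast [Nat.factorial_succ]
  exact stmt12_key ((k j : ℝ) : ℂ) ((I j : ℂ) + 1) ((mdeg I : ℂ) + 1)
    ((lam (mdeg I) : ℝ) : ℂ) ((lam (mdeg I + 1) : ℝ) : ℂ)
    ((mfact I : ℂ)) ((Nat.factorial (mdeg I) : ℂ))
    (∏ r ∈ I.support, ((k r : ℝ) : ℂ) ^ (2 * I r))
    ((starRingEnd ℂ) (y j)) (∏ r ∈ I.support, (starRingEnd ℂ) (y r) ^ I r)
    (Complex.ofReal_ne_zero.mpr (hk j).ne')
    (Nat.cast_add_one_ne_zero _) (Nat.cast_add_one_ne_zero _)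
    (Complex.ofReal_ne_zero.mpr (hlam_pos (mdeg I)).ne')
    (Complex.ofReal_ne_zero.mpr (hlam_pos (mdeg I + 1)).ne')
    (by exact_mod_cast hF.ne') (by exact_mod_cast (Nat.factorial_pos (mdeg I)).ne')
    (Finset.prod_ne_zero_iff.mpr fun r _ =>
      pow_ne_zero _ (Complex.ofReal_ne_zero.mpr (hk r).ne'))
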